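/- For every integer r ≥ 1 and every parameter k > 0, the curvature of the mellowmin operator is bounded below by −k times the identity: the function a ↦ m̃in_k(a) + (k/2)·∑_{i} (a i)^2 is convex on all of ℝ^r. -/

import Mathlib

open Real

private lemma line_convex (r : ℕ) (hr : 1 ≤ r) (k : ℝ) (hk : 0 < k) (x d : Fin r → ℝ) :
    ConvexOn ℝ Set.univ (fun t : ℝ =>
      (-(1 / k) * Real.log ((1 / (r : ℝ)) * ∑ i, Real.exp (-k * (x i + t * d i))))
        + (k / 2) * ∑ i, (x i + t * d i) ^ 2) := by
  haveI : Nonempty (Fin r) := Fin.pos_iff_nonempty.mp hr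
  have hrpos : (0 : ℝ) < 1 / (r : ℝ) := by positivity
  set S : ℝ → ℝ := fun t => (1 / (r : ℝ)) * ∑ i, Real.exp (-k * (x i + t * d i)) with hS_def
  set S1 : ℝ → ℝ := fun t =>
    (1 / (r : ℝ)) * ∑ i, Real.exp (-k * (x i + t * d i)) * (-k * d i) with hS1_def
  set S2 : ℝ → ℝ := fun t =>
    (1 / (r : ℝ)) * ∑ i, Real.exp (-k * (x i + t * d i)) * (-k * d i) * (-k * d i) with hS2_def
  have hSpos : ∀ t, 0 < S t := by
    intro t
    have : 0 < ∑ i, Real.exp (-k * (x i + t * d i)) :=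
      Finset.sum_pos (fun i _ => Real.exp_pos _) Finset.univ_nonempty
    positivity
  have ha : ∀ (i : Fin r) (t : ℝ), HasDerivAt (fun t : ℝ => x i + t * d i) (d i) t := by
    intro i t
    simpa using ((hasDerivAt_id t).mul_const (d i)).const_add (x i)
  have hw : ∀ (i : Fin r) (t : ℝ),
      HasDerivAt (fun t : ℝ => Real.exp (-k * (x i + t * d i)))
        (Real.exp (-k * (x i + t * d i)) * (-k * d i)) t := by
    intro i t
    exact (((ha i t).const_mul (-k)).exp)
  have hS : ∀ t, HasDerivAt S (S1 t) t := by
    intro t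
    exact (HasDerivAt.fun_sum fun i _ => hw i t).const_mul _
  have hS1 : ∀ t, HasDerivAt S1 (S2 t) t := by
    intro t
    exact (HasDerivAt.fun_sum fun i _ => (hw i t).mul_const (-k * d i)).const_mul _
  set φ' : ℝ → ℝ := fun t =>
    -(1 / k) * (S1 t / S t) + (k / 2) * ∑ i, 2 * (x i + t * d i) * d i with hφ'_def
  have hφ : ∀ t, HasDerivAt (fun t : ℝ =>
      (-(1 / k) * Real.log ((1 / (r : ℝ)) * ∑ i, Real.exp (-k * (x i + t * d i))))
        + (k / 2) * ∑ i, (x i + t * d i) ^ 2) (φ' t) t := by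
    intro t
    have h1 : HasDerivAt (fun t => Real.log (S t)) (S1 t / S t) t :=
      (hS t).log (hSpos t).ne'
    have h2 : ∀ (i : Fin r), HasDerivAt (fun t : ℝ => (x i + t * d i) ^ 2)
        (2 * (x i + t * d i) * d i) t := by
      intro i
      have := (ha i t).fun_pow 2
      simpa using this
    exact (h1.const_mul (-(1 / k))).add ((HasDerivAt.fun_sum fun i _ => h2 i).const_mul (k / 2))
  have hφ' : ∀ t, HasDerivAt φ'
      (-(1 / k) * ((S2 t * S t - S1 t * S1 t) / (S t) ^ 2)
        + (k / 2) * ∑ i, 2 * d i * d i) t := by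
    intro t
    have h1 : HasDerivAt (fun t => S1 t / S t)
        ((S2 t * S t - S1 t * S1 t) / (S t) ^ 2) t :=
      (hS1 t).div (hS t) (hSpos t).ne'
    have h2 : ∀ (i : Fin r), HasDerivAt (fun t : ℝ => 2 * (x i + t * d i) * d i)
        (2 * d i * d i) t := by
      intro i
      exact ((ha i t).const_mul 2).mul_const (d i)
    exact (h1.const_mul (-(1 / k))).add ((HasDerivAt.fun_sum fun i _ => h2 i).const_mul (k / 2))
  apply convexOn_of_hasDerivWithinAt2_nonneg (f' := φ') convex_univ
  · exact fun t _ => ((hφ t).differentiableAt.continuousAt).continuousWithinAt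
  · intro t _
    exact (hφ t).hasDerivWithinAt
  · intro t _
    exact (hφ' t).hasDerivWithinAt
  · intro t _
    set D : ℝ := ∑ i, d i ^ 2 with hD_def
    have hDnn : 0 ≤ D := Finset.sum_nonneg fun i _ => sq_nonneg _
    have hsum2 : (∑ i, 2 * d i * d i) = 2 * D := by
      rw [hD_def, Finset.mul_sum]; congr 1; funext i; ring
    have hS2le : S2 t ≤ k ^ 2 * D * S t := by
      have hterm : ∀ i : Fin r, Real.exp (-k * (x i + t * d i)) * (-k * d i) * (-k * d i)
          ≤ k ^ 2 * D * Real.exp (-k * (x i + t * d i)) := by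
        intro i
        have h2 : d i ^ 2 ≤ D := Finset.single_le_sum (fun j _ => sq_nonneg (d j))
          (Finset.mem_univ i)
        nlinarith [mul_nonneg (mul_nonneg (sq_nonneg k) (sub_nonneg.mpr h2))
          (Real.exp_pos (-k * (x i + t * d i))).le]
      have hsum : (∑ i, Real.exp (-k * (x i + t * d i)) * (-k * d i) * (-k * d i))
          ≤ ∑ i, k ^ 2 * D * Real.exp (-k * (x i + t * d i)) :=
        Finset.sum_le_sum (fun i _ => hterm i)
      calc S2 t = (1 / (r : ℝ)) * ∑ i, Real.exp (-k * (x i + t * d i)) * (-k * d i) * (-k * d i) :=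
            rfl
        _ ≤ (1 / (r : ℝ)) * ∑ i, k ^ 2 * D * Real.exp (-k * (x i + t * d i)) :=
            mul_le_mul_of_nonneg_left hsum hrpos.le
        _ = k ^ 2 * D * S t := by
            rw [hS_def]
            simp only
            rw [← Finset.mul_sum]
            ring
    have hSt := hSpos t
    have hfrac : (S2 t * S t - S1 t * S1 t) / (S t) ^ 2 ≤ k ^ 2 * D := by
      rw [div_le_iff₀ (by positivity)]
      nlinarith [sq_nonneg (S1 t)]
    rw [hsum2]
    have h3 : -(1 / k) * ((S2 t * S t - S1 t * S1 t) / (S t) ^ 2) ≥ -(1 / k) * (k ^ 2 * D) := by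
      have hkinv : 0 < 1 / k := by positivity
      nlinarith
    have h4 : -(1 / k) * (k ^ 2 * D) + (k / 2) * (2 * D) = 0 := by field_simp; ring
    linarith

/-- Semiconvexity of the mellowmin operator: its curvature is bounded below by `-k`,
i.e. `a ↦ mellowmin k a + (k/2) * ‖a‖²` is convex on all of `ℝ^r`. -/
theorem stmt_10 (r : ℕ) (hr : 1 ≤ r) (k : ℝ) (hk : 0 < k) :
    ConvexOn ℝ Set.univ
      (fun a : Fin r → ℝ =>
        (-(1 / k) * Real.log ((1 / (r : ℝ)) * ∑ i, Real.exp (-k * a i)))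
          + (k / 2) * ∑ i, (a i) ^ 2) := by
  refine ⟨convex_univ, ?_⟩
  intro x _ y _ s t hs ht hst
  have hline := line_convex r hr k hk x (fun i => y i - x i)
  have key := hline.2 (Set.mem_univ (0 : ℝ)) (Set.mem_univ (1 : ℝ)) hs ht hst
  simp only [smul_eq_mul, mul_zero, mul_one, zero_add] at key
  have e0 : ∀ i : Fin r, x i + (0 : ℝ) * (y i - x i) = x i := fun i => by ring
  have e1 : ∀ i : Fin r, x i + (1 : ℝ) * (y i - x i) = y i := fun i => by ring
  have et : ∀ i : Fin r, x i + t * (y i - x i) = (s • x + t • y) i := fun i => by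
    simp [Pi.add_apply, Pi.smul_apply, smul_eq_mul]
    have : s = 1 - t := by linarith
    rw [this]; ring
  simp only [e0, e1, et] at key
  convert key using 2 <;> rfl
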